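/- For α, β ∈ ℂ, the 3-dimensional algebras G₀₅^α and G₀₅^β (with products e₁·e₂ = e₂, e₁·e₃ = α e₃ resp. β e₃) are isomorphic if α·β = 1. -/
import Mathlib

/-- Multiplication of G₀₅^γ on ℂ³: e₁e₂ = e₂, e₁e₃ = γ e₃. -/
noncomputable def mulG05 (γ : ℂ) (x y : Fin 3 → ℂ) : Fin 3 → ℂ :=
  ![0, x 0 * y 1, γ * (x 0 * y 2)]

/-- G₀₅^α ≅ G₀₅^β whenever α·β = 1. -/
theorem stmt_11 (α β : ℂ) (h : α * β = 1) :
    ∃ φ : (Fin 3 → ℂ) ≃ₗ[ℂ] (Fin 3 → ℂ),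
      ∀ x y, φ (mulG05 α x y) = mulG05 β (φ x) (φ y) := by
  refine ⟨{
    toFun := fun x => ![α * x 0, x 2, x 1]
    invFun := fun x => ![β * x 0, x 2, x 1]
    map_add' := by
      intro x y
      funext i
      fin_cases i <;> simp [Pi.add_apply] <;> ring
    map_smul' := by
      intro c x
      funext i
      fin_cases i <;> simp [Pi.smul_apply, smul_eq_mul] <;> ring
    left_inv := by
      intro x
      funext i
      fin_cases i <;> simp
      rw [← mul_assoc, mul_comm β α, h, one_mul]
    right_inv := by
      intro x
      funext i
      fin_cases i <;> simp
      rw [← mul_assoc, h, one_mul] }, ?_⟩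
  intro x y
  funext i
  fin_cases i <;> simp [mulG05] <;> ring_nf
  rw [mul_assoc, mul_comm β α, h, mul_one]
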